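/- (Lemma 2.4(1)) In the generalized matrix ring setting, let φ : R → R be an additive map satisfying condition (P), and define ψ(U) = φ(U) − φ(1)·U + T·U − U·T where T = e·φ(e)·f + f·φ(f)·e and f = 1 − e. Then ψ(e) = 0 and ψ(f) = 0. -/
import Mathlib

theorem psi_vanishes_on_idempotents
    {R : Type*} [Ring R] (e : R) (he : e * e = e)
    (h2A : ∀ x : R, e * x * e + e * x * e = 0 → e * x * e = 0)
    (h2B : ∀ x : R, (1 - e) * x * (1 - e) + (1 - e) * x * (1 - e) = 0 →
      (1 - e) * x * (1 - e) = 0)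
    (hlf : ∀ a : R, a = e * a * e → (∀ x : R, a * (e * x * (1 - e)) = 0) → a = 0)
    (hrf : ∀ b : R, b = (1 - e) * b * (1 - e) → (∀ x : R, (e * x * (1 - e)) * b = 0) → b = 0)
    (φ : R →+ R)
    (hP : ∀ U V : R, U * V = 0 → V * U = 0 →
      φ U * V + V * φ U + U * φ V + φ V * U = 0)
    (ψ : R → R)
    (hψ : ∀ U : R, ψ U = φ U - φ 1 * U +
      ((e * φ e * (1 - e) + (1 - e) * φ (1 - e) * e) * U -
        U * (e * φ e * (1 - e) + (1 - e) * φ (1 - e) * e))) :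
    ψ e = 0 ∧ ψ (1 - e) = 0 := by
  have he' : ∀ x : R, e * (e * x) = e * x := fun x => by rw [← mul_assoc, he]
  have hef : e * (1 - e) = 0 := by rw [mul_sub, mul_one, he, sub_self]
  have hfe : (1 - e) * e = 0 := by rw [sub_mul, one_mul, he, sub_self]
  have hK := hP e (1 - e) hef hfe
  set p := φ e with hp
  set q := φ (1 - e) with hq
  -- Pierce corner components vanish
  have h1 : e * q * e = 0 := by
    apply h2A
    have h := congrArg (fun x => e * x * e) hK
    simp only [mul_add, add_mul, mul_zero, zero_mul, mul_sub, sub_mul, mul_one, one_mul,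
      mul_assoc, he, he'] at h
    simp only [mul_assoc]
    abel_nf at h ⊢
    exact h
  have h2 : (1 - e) * p * (1 - e) = 0 := by
    apply h2B
    have h := congrArg (fun x => (1 - e) * x * (1 - e)) hK
    simp only [mul_add, add_mul, mul_zero, zero_mul, mul_sub, sub_mul, mul_one, one_mul,
      mul_assoc, he, he'] at h
    simp only [mul_sub, sub_mul, mul_one, one_mul, mul_assoc, he, he']
    abel_nf at h ⊢
    exact h
  have hφ1 : φ 1 = p + q := by
    have h : e + (1 - e) = 1 := by abel
    rw [← h, map_add]
  constructor
  · rw [hψ e, hφ1]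
    have key : p - (p + q) * e +
        ((e * p * (1 - e) + (1 - e) * q * e) * e -
          e * (e * p * (1 - e) + (1 - e) * q * e)) =
        (1 - e) * p * (1 - e) - e * q * e := by
      simp only [mul_sub, sub_mul, mul_one, one_mul, mul_add, add_mul, mul_assoc, he, he']
      abel
    rw [key, h1, h2, sub_zero]
  · rw [hψ (1 - e), hφ1]
    have key : q - (p + q) * (1 - e) +
        ((e * p * (1 - e) + (1 - e) * q * e) * (1 - e) -
          (1 - e) * (e * p * (1 - e) + (1 - e) * q * e)) =
        e * q * e - (1 - e) * p * (1 - e) := by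
      simp only [mul_sub, sub_mul, mul_one, one_mul, mul_add, add_mul, mul_assoc, he, he']
      abel
    rw [key, h1, h2, zero_sub, neg_zero]
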